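/- Generalized Dobinski-type formula for Fubini numbers: F_{n,S} = (1/2) sum over k >= 0 of 2^{-k} sum_{l=0}^n {n brace l}_S (k)_l, where (k)_l is the falling factorial. -/

import Mathlib

open scoped Classical

/-- The `S`-restricted Stirling number of the second kind: the number of partitions of
`[n]` into exactly `k` nonempty blocks, all of whose sizes lie in `S`. -/
noncomputable def sStirling (S : Set ℕ) (n k : ℕ) : ℕ :=
  Nat.card {P : Finpartition (Finset.univ : Finset (Fin n)) //
    P.parts.card = k ∧ ∀ b ∈ P.parts, b.card ∈ S}

/-- The formal power series `E_S(x) = ∑_{s ∈ S} x^s / s!`. -/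
noncomputable def ES (S : Set ℕ) : PowerSeries ℚ :=
  PowerSeries.mk fun n => if n ∈ S then ((n.factorial : ℚ))⁻¹ else 0

/-- The `S`-restricted Fubini number: the number of ordered set partitions of `[n]`
with all block sizes in `S`. -/
noncomputable def sFubini (S : Set ℕ) (n : ℕ) : ℕ :=
  ∑ k ∈ Finset.range (n + 1), k.factorial * sStirling S n k

lemma hasSum_desc_half (l : ℕ) :
    HasSum (fun k : ℕ => ((2 : ℝ) ^ k)⁻¹ * k.descFactorial l) (2 * l.factorial) := by
  have hr : ‖(2 : ℝ)⁻¹‖ < 1 := by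
    rw [Real.norm_eq_abs]; rw [abs_of_pos (by norm_num)]; norm_num
  have h := (hasSum_choose_mul_geometric_of_norm_lt_one l hr).mul_left
    ((l.factorial : ℝ) * ((2 : ℝ)⁻¹) ^ l)
  have heq : (fun n : ℕ => (l.factorial : ℝ) * ((2 : ℝ)⁻¹) ^ l *
      ((n + l).choose l * ((2 : ℝ)⁻¹) ^ n)) =
      fun n : ℕ => ((2 : ℝ) ^ (n + l))⁻¹ * ((n + l).descFactorial l) := by
    funext n
    rw [Nat.descFactorial_eq_factorial_mul_choose]
    push_cast
    rw [pow_add, mul_inv, ← inv_pow, ← inv_pow]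
    ring
  rw [heq] at h
  have hval : (l.factorial : ℝ) * ((2 : ℝ)⁻¹) ^ l * (1 / (1 - (2 : ℝ)⁻¹) ^ (l + 1)) =
      2 * l.factorial := by
    have : (1 - (2 : ℝ)⁻¹) = 2⁻¹ := by norm_num
    rw [this]
    field_simp
    ring
  rw [hval] at h
  have goal : HasSum (fun n : ℕ => ((2 : ℝ) ^ (n + l))⁻¹ * ((n + l).descFactorial l))
      ((2 * l.factorial : ℝ) -
        ∑ i ∈ Finset.range l, ((2 : ℝ) ^ i)⁻¹ * (i.descFactorial l : ℝ)) → HasSum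
      (fun k : ℕ => ((2 : ℝ) ^ k)⁻¹ * k.descFactorial l) (2 * l.factorial) :=
    (hasSum_nat_add_iff' l).mp
  apply goal
  convert h using 1
  case e'_3 => rfl
  have : ∀ i ∈ Finset.range l, ((2 : ℝ) ^ i)⁻¹ * (i.descFactorial l : ℝ) = 0 := by
    intro i hi
    rw [Nat.descFactorial_eq_zero_iff_lt.mpr (Finset.mem_range.mp hi)]
    simp
  rw [Finset.sum_congr rfl this]
  simp

lemma summable_desc_half (l : ℕ) :
    Summable (fun k : ℕ => ((2 : ℝ) ^ k)⁻¹ * k.descFactorial l) :=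
  (hasSum_desc_half l).summable

/-- Dobinski-type formula for Fubini numbers:
`F_{n,S} = (1/2) ∑_{k ≥ 0} 2^{-k} ∑_{l=0}^n {n brace l}_S (k)_l`. -/
theorem sFubini_dobinski (S : Set ℕ) (hS : 0 ∉ S) (n : ℕ) :
    (sFubini S n : ℝ) = (1 / 2) * ∑' k : ℕ, ((2 : ℝ) ^ k)⁻¹ *
      ∑ l ∈ Finset.range (n + 1), (sStirling S n l : ℝ) * k.descFactorial l := by
  have hsummand : ∀ k : ℕ, ((2 : ℝ) ^ k)⁻¹ *
      ∑ l ∈ Finset.range (n + 1), (sStirling S n l : ℝ) * k.descFactorial l =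
      ∑ l ∈ Finset.range (n + 1),
        (sStirling S n l : ℝ) * (((2 : ℝ) ^ k)⁻¹ * k.descFactorial l) := by
    intro k
    rw [Finset.mul_sum]
    exact Finset.sum_congr rfl fun l _ => by ring
  simp_rw [hsummand]
  rw [Summable.tsum_finsetSum (fun l _ => ((summable_desc_half l).mul_left _))]
  have : ∀ l ∈ Finset.range (n + 1),
      ∑' k : ℕ, (sStirling S n l : ℝ) * (((2 : ℝ) ^ k)⁻¹ * k.descFactorial l) =
      (sStirling S n l : ℝ) * (2 * l.factorial) := by
    intro l _
    rw [tsum_mul_left, (hasSum_desc_half l).tsum_eq]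
  rw [Finset.sum_congr rfl this, Finset.mul_sum]
  unfold sFubini
  push_cast
  exact Finset.sum_congr rfl fun l _ => by ring
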